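/- Let X = (x₁,…,x_n) be a dataset in ℝ^p, h = ⌊(n+1)/2⌋, and m ≤ ⌊(n−1)/2⌋. Let X* be a dataset obtained from X by replacing the last m points, keeping x₁,…,x_{n−m} unchanged. Let θ₀ ∈ ℝ^p be such that c₂ := max_{1≤i≤n−m} ‖x_i − θ₀‖ < ∞ is a bound on the distances from θ₀ to the retained original points, and let θ ∈ ℝ^p be any point whose LTS objective on X* does not exceed that of θ₀, i.e., Σ_{j=1}^h d²_{(j)}(X*, θ) ≤ Σ_{j=1}^h d²_{(j)}(X*, θ₀), where d_{(j)}(Y, θ) denotes the j-th smallest of the distances ‖y_i − θ‖. Then there exists a retained original point x_j (1 ≤ j ≤ n−m) with ‖x_j − θ‖² ≤ Σ_{j=1}^h d²_{(j)}(X*, θ₀) ≤ (h c₂)², and consequently ‖θ − θ₀‖ ≤ h c₂ + c₂, so θ lies at bounded distance from θ₀. -/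

import Mathlib

open MeasureTheory

/-- The sum of the `h` smallest values of `v 0, …, v (n-1)`: the minimum, over index sets
`I` of cardinality `h`, of `∑ i ∈ I, v i`.  Applied to the squared distances
`v i = ‖yᵢ − θ‖²` this is the LTS objective `∑_{j=1}^h d²_{(j)}(Y, θ)`. -/
noncomputable def trimmedSum {n : ℕ} (h : ℕ) (v : Fin n → ℝ) : ℝ :=
  sInf {s : ℝ | ∃ I : Finset (Fin n), I.card = h ∧ s = ∑ i ∈ I, v i}

lemma trimmedSum_set_finite {n h : ℕ} (v : Fin n → ℝ) :
    {s : ℝ | ∃ I : Finset (Fin n), I.card = h ∧ s = ∑ i ∈ I, v i}.Finite := by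
  have hsub : {s : ℝ | ∃ I : Finset (Fin n), I.card = h ∧ s = ∑ i ∈ I, v i}
      ⊆ (fun I : Finset (Fin n) => ∑ i ∈ I, v i) '' Set.univ := by
    rintro s ⟨I, _, rfl⟩; exact ⟨I, trivial, rfl⟩
  exact (Set.finite_univ.image _).subset hsub

lemma trimmedSum_le {n h : ℕ} (v : Fin n → ℝ) (I : Finset (Fin n)) (hI : I.card = h) :
    trimmedSum h v ≤ ∑ i ∈ I, v i :=
  csInf_le (trimmedSum_set_finite v).bddBelow ⟨I, hI, rfl⟩

lemma trimmedSum_mem {n h : ℕ} (hhn : h ≤ n) (v : Fin n → ℝ) :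
    ∃ I : Finset (Fin n), I.card = h ∧ trimmedSum h v = ∑ i ∈ I, v i := by
  obtain ⟨I, _, hI⟩ := Finset.exists_subset_card_eq
    (show h ≤ (Finset.univ : Finset (Fin n)).card by simpa using hhn)
  have hne : {s : ℝ | ∃ I : Finset (Fin n), I.card = h ∧ s = ∑ i ∈ I, v i}.Nonempty :=
    ⟨∑ i ∈ I, v i, I, hI, rfl⟩
  obtain ⟨J, hJ, hs⟩ := hne.csInf_mem (trimmedSum_set_finite v)
  exact ⟨J, hJ, hs⟩

/-- **quantitative step in the k-step LTS breakdown proof.** Let `X` be a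
dataset of `n ≥ 1` points in `ℝ^p`, `h = ⌊(n+1)/2⌋`, `m ≤ ⌊(n−1)/2⌋`, and let `X*` be
obtained from `X` by replacing the last `m` points (keeping `x₁,…,x_{n−m}`).  Let `θ₀` be a
point with `‖xᵢ − θ₀‖ ≤ c₂` for every retained original point, and let `θ` be any point
whose LTS objective on `X*` does not exceed that of `θ₀`.  Then some retained original point
`x_j` satisfies `‖x_j − θ‖² ≤ ∑_{j=1}^h d²_{(j)}(X*, θ₀) ≤ (h c₂)²`, and consequently
`‖θ − θ₀‖ ≤ h c₂ + c₂`. -/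
theorem kstep_lts_bounded_key_step
    {p n : ℕ} (hn : 1 ≤ n)
    (X Xstar : Fin n → EuclideanSpace ℝ (Fin p))
    (h m : ℕ) (hh : h = (n + 1) / 2) (hm : m ≤ (n - 1) / 2)
    (hkeep : ∀ i : Fin n, (i : ℕ) < n - m → Xstar i = X i)
    (θ₀ : EuclideanSpace ℝ (Fin p)) (c₂ : ℝ)
    (hc₂ : ∀ i : Fin n, (i : ℕ) < n - m → ‖X i - θ₀‖ ≤ c₂)
    (θ : EuclideanSpace ℝ (Fin p))
    (hobj : trimmedSum h (fun i => ‖Xstar i - θ‖ ^ 2) ≤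
      trimmedSum h (fun i => ‖Xstar i - θ₀‖ ^ 2)) :
    (∃ j : Fin n, (j : ℕ) < n - m ∧
      ‖X j - θ‖ ^ 2 ≤ trimmedSum h (fun i => ‖Xstar i - θ₀‖ ^ 2) ∧
      trimmedSum h (fun i => ‖Xstar i - θ₀‖ ^ 2) ≤ ((h : ℝ) * c₂) ^ 2) ∧
    ‖θ - θ₀‖ ≤ (h : ℝ) * c₂ + c₂ := by
  have hhnm : h ≤ n - m := by omega
  have hmh : m < h := by omega
  have h1 : 1 ≤ h := by omega
  have hhn : h ≤ n := by omega
  -- c₂ ≥ 0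
  have h0nm : (0 : ℕ) < n - m := by omega
  have hc₂0 : 0 ≤ c₂ := le_trans (norm_nonneg _) (hc₂ ⟨0, hn⟩ h0nm)
  -- upper bound for θ₀
  set I₀ : Finset (Fin n) := (Finset.univ : Finset (Fin h)).map (Fin.castLEEmb hhn) with hI₀def
  have hI₀card : I₀.card = h := by simp [hI₀def]
  have hI₀mem : ∀ i ∈ I₀, (i : ℕ) < n - m := by
    intro i hi
    simp only [hI₀def, Finset.mem_map, Finset.mem_univ, true_and] at hi
    obtain ⟨k, hk⟩ := hi
    have : (i : ℕ) = (k : ℕ) := by rw [← hk]; rfl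
    omega
  have hub : trimmedSum h (fun i => ‖Xstar i - θ₀‖ ^ 2) ≤ ((h : ℝ) * c₂) ^ 2 := by
    have h1' : trimmedSum h (fun i => ‖Xstar i - θ₀‖ ^ 2) ≤ ∑ i ∈ I₀, ‖Xstar i - θ₀‖ ^ 2 :=
      trimmedSum_le _ I₀ hI₀card
    have h2' : ∑ i ∈ I₀, ‖Xstar i - θ₀‖ ^ 2 ≤ ∑ _i ∈ I₀, c₂ ^ 2 := by
      apply Finset.sum_le_sum
      intro i hi
      rw [hkeep i (hI₀mem i hi)]
      exact pow_le_pow_left₀ (norm_nonneg _) (hc₂ i (hI₀mem i hi)) 2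
    have h3' : ∑ _i ∈ I₀, c₂ ^ 2 = (h : ℝ) * c₂ ^ 2 := by
      rw [Finset.sum_const, hI₀card]; ring
    have h4' : (h : ℝ) * c₂ ^ 2 ≤ ((h : ℝ) * c₂) ^ 2 := by
      have : (1 : ℝ) ≤ (h : ℝ) := by exact_mod_cast h1
      nlinarith [sq_nonneg c₂]
    linarith
  -- existence of retained point
  obtain ⟨I, hIcard, hIsum⟩ := trimmedSum_mem hhn (fun i => ‖Xstar i - θ‖ ^ 2)
  have hex : ∃ j ∈ I, (j : ℕ) < n - m := by
    by_contra hcon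
    push_neg at hcon
    have hmap : ∀ j ∈ I, n - m ≤ (j : ℕ) := fun j hj => hcon j hj
    have hinj : Set.InjOn (fun j : Fin n => (j : ℕ) - (n - m)) I := by
      intro a ha b hb hab
      have ha' := hmap a ha
      have hb' := hmap b hb
      simp only at hab
      exact Fin.ext (by omega)
    have hcardle : I.card ≤ (Finset.range m).card := by
      refine Finset.card_le_card_of_injOn (fun j : Fin n => (j : ℕ) - (n - m)) ?_ hinj
      intro j hj
      have := hmap j hj
      have hjn := j.isLt
      simp only [Finset.mem_coe, Finset.mem_range]
      omega
    simp [hIcard] at hcardle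
    omega
  obtain ⟨j, hjI, hjlt⟩ := hex
  have hjbound : ‖X j - θ‖ ^ 2 ≤ trimmedSum h (fun i => ‖Xstar i - θ₀‖ ^ 2) := by
    have hle : ‖Xstar j - θ‖ ^ 2 ≤ ∑ i ∈ I, ‖Xstar i - θ‖ ^ 2 :=
      Finset.single_le_sum (f := fun i => ‖Xstar i - θ‖ ^ 2) (fun i _ => sq_nonneg _) hjI
    rw [hkeep j hjlt] at hle
    calc ‖X j - θ‖ ^ 2 ≤ ∑ i ∈ I, ‖Xstar i - θ‖ ^ 2 := hle
      _ = trimmedSum h (fun i => ‖Xstar i - θ‖ ^ 2) := hIsum.symm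
      _ ≤ _ := hobj
  refine ⟨⟨j, hjlt, hjbound, hub⟩, ?_⟩
  -- final bound
  have hsq : ‖X j - θ‖ ^ 2 ≤ ((h : ℝ) * c₂) ^ 2 := le_trans hjbound hub
  have hhc₂0 : 0 ≤ (h : ℝ) * c₂ := by positivity
  have hnorm : ‖X j - θ‖ ≤ (h : ℝ) * c₂ := by
    nlinarith [norm_nonneg (X j - θ)]
  calc ‖θ - θ₀‖ ≤ ‖θ - X j‖ + ‖X j - θ₀‖ := norm_sub_le_norm_sub_add_norm_sub θ (X j) θ₀
    _ ≤ (h : ℝ) * c₂ + c₂ := by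
        rw [norm_sub_rev]
        exact add_le_add hnorm (hc₂ j hjlt)
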